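/- For any N ≥ 1, d_q^N η = (1−q)(1−q^2)⋯(1−q^N) η^{N+1}. In particular, if q^N = 1 then d_q^N η = 0. -/
import Mathlib


/-- The `q`-differential of a homogeneous element `B` of degree `b`:
`d_q B = η B - q^b B η`. -/
noncomputable def dq {A : Type*} [Ring A] [Algebra ℂ A] (q : ℂ) (η : A) (b : ℕ) (B : A) : A :=
  η * B - q ^ b • (B * η)

/-- Iterated `q`-differential `d_q^n` applied to an element of degree `b`
(each application raises the degree by one). -/
noncomputable def dqPow {A : Type*} [Ring A] [Algebra ℂ A] (q : ℂ) (η : A) (b : ℕ) :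
    ℕ → A → A
  | 0, B => B
  | n + 1, B => dq q η (b + n) (dqPow q η b n B)


lemma dqPow_eta_aux {A : Type*} [Ring A] [Algebra ℂ A]
    (q : ℂ) (η : A) (N : ℕ) :
    dqPow q η 1 N η = (∏ k ∈ Finset.Icc 1 N, (1 - q ^ k)) • η ^ (N + 1) := by
  induction N with
  | zero => simp [dqPow]
  | succ n ih =>
      rw [dqPow, ih, dq, Finset.prod_Icc_succ_top (by omega : 1 ≤ n + 1)]
      rw [mul_smul_comm, smul_mul_assoc, smul_smul]
      rw [← pow_succ, ← pow_succ']
      rw [← sub_smul]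
      congr 1
      ring

/-- for any `N ≥ 1`, `d_q^N η = (1−q)(1−q^2)⋯(1−q^N) η^{N+1}`
(`η` has degree `1`); in particular `q^N = 1` implies `d_q^N η = 0`. -/
theorem dqPow_eta {A : Type*} [Ring A] [Algebra ℂ A]
    (q : ℂ) (η : A) (N : ℕ) (hN : 1 ≤ N) :
    dqPow q η 1 N η = (∏ k ∈ Finset.Icc 1 N, (1 - q ^ k)) • η ^ (N + 1) ∧
      (q ^ N = 1 → dqPow q η 1 N η = 0) := by
  refine ⟨dqPow_eta_aux q η N, fun hq => ?_⟩
  rw [dqPow_eta_aux q η N,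
    Finset.prod_eq_zero (Finset.mem_Icc.mpr ⟨hN, le_refl N⟩) (by rw [hq]; ring), zero_smul]
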